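/- Let u : ℝ² → ℝ, u(x₁,x₂) = (x₁+x₂)². For h > 0 and a grid point (a,b), define M = [[α, β],[β, γ]] where α = u(a−h,b)+u(a+h,b)−2u(a,b), γ = u(a,b−h)+u(a,b+h)−2u(a,b), and β = ½(u(a+h,b+h)+u(a−h,b−h)−u(a+h,b−h)−u(a−h,b+h)). Then M = h²·[[2,4],[4,2]], and M is not positive semidefinite. -/

import Mathlib

/-- The discrete Hessian stencil of `u(x₁,x₂) = (x₁+x₂)²` at an 8-neighbor node of a
'Union Jack' mesh equals `h² · [[2,4],[4,2]]` and is not positive semidefinite. -/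
theorem unionjack_stencil_not_posSemidef
    (u : ℝ → ℝ → ℝ) (hu : ∀ x₁ x₂, u x₁ x₂ = (x₁ + x₂) ^ 2)
    (h a b : ℝ) (hh : 0 < h)
    (α β γ : ℝ)
    (hα : α = u (a - h) b + u (a + h) b - 2 * u a b)
    (hγ : γ = u a (b - h) + u a (b + h) - 2 * u a b)
    (hβ : β = (u (a + h) (b + h) + u (a - h) (b - h)
        - u (a + h) (b - h) - u (a - h) (b + h)) / 2) :
    (Matrix.of ![![α, β], ![β, γ]]) = h ^ 2 • Matrix.of ![![(2 : ℝ), 4], ![4, 2]] ∧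
      ¬ (Matrix.of ![![α, β], ![β, γ]]).PosSemidef := by
  simp only [hu] at hα hβ hγ
  have ha : α = 2 * h ^ 2 := by rw [hα]; ring
  have hb : β = 4 * h ^ 2 := by rw [hβ]; ring
  have hg : γ = 2 * h ^ 2 := by rw [hγ]; ring
  subst ha hb hg
  constructor
  · ext i j
    fin_cases i <;> fin_cases j <;> simp [Matrix.smul_apply] <;> ring
  · intro hps
    have := hps.dotProduct_mulVec_nonneg ![1, -1]
    simp [Matrix.mulVec, dotProduct, Fin.sum_univ_two, Matrix.vecHead,
      Matrix.vecTail] at this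
    nlinarith [pow_pos hh 2]
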